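/- Let (m₁,m₂,m₃,ξ,p) be a collision solution of the reduced two-body system on [t₀, t*) with t* < ∞ and ξ(t) → +∞ as t → t*⁻. Then ξ is eventually strictly monotonically increasing: there exists t₁ ∈ [t₀, t*) such that ξ'(t) > 0 for all t ∈ [t₁, t*). -/

import Mathlib

open Filter Set

lemma my_const_of_deriv_zero {f : ℝ → ℝ} {a b : ℝ}
    (hf : ∀ t ∈ Set.Ico a b, HasDerivAt f 0 t) :
    ∀ t ∈ Set.Ico a b, f t = f a := by
  intro t ht
  have hsub : Set.Icc a t ⊆ Set.Ico a b := fun x hx => ⟨hx.1, lt_of_le_of_lt hx.2 ht.2⟩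
  exact constant_of_has_deriv_right_zero
    (fun x hx => (hf x (hsub hx)).continuousAt.continuousWithinAt)
    (fun x hx => (hf x (hsub ⟨hx.1, hx.2.le⟩)).hasDerivWithinAt)
    t ⟨ht.1, le_refl t⟩

lemma my_lt_sqrt (x : ℝ) : x < Real.sqrt (x ^ 2 + 1) := by
  have h := Real.sq_sqrt (show (0:ℝ) ≤ x ^ 2 + 1 by positivity)
  have h2 := Real.sqrt_nonneg (x ^ 2 + 1)
  nlinarith [sq_nonneg (Real.sqrt (x ^ 2 + 1) - x), sq_nonneg (Real.sqrt (x ^ 2 + 1) + x)]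

lemma my_tendsto_div_sqrt_one :
    Tendsto (fun x : ℝ => x / Real.sqrt (x ^ 2 + 1)) atTop (nhds 1) := by
  have h0 : Tendsto (fun x : ℝ => 1 - (x + 1)⁻¹) atTop (nhds 1) := by
    have h1 : Tendsto (fun x : ℝ => x + 1) atTop atTop :=
      tendsto_atTop_add_const_right atTop 1 tendsto_id
    have := tendsto_inv_atTop_zero.comp h1
    simpa using tendsto_const_nhds.sub this
  refine tendsto_of_tendsto_of_tendsto_of_le_of_le' h0 tendsto_const_nhds ?_ ?_
  · filter_upwards [eventually_ge_atTop (0:ℝ)] with x hx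
    have h1 : (0:ℝ) < x + 1 := by linarith
    have hs : Real.sqrt (x ^ 2 + 1) ≤ x + 1 := by
      rw [show x ^ 2 + 1 = (x+1)^2 - 2*x from by ring]
      calc Real.sqrt ((x+1)^2 - 2*x) ≤ Real.sqrt ((x+1)^2) := by
            apply Real.sqrt_le_sqrt; nlinarith
        _ = x + 1 := by rw [Real.sqrt_sq h1.le]
    have hspos : 0 < Real.sqrt (x ^ 2 + 1) := Real.sqrt_pos.2 (by positivity)
    have : 1 - (x+1)⁻¹ = x / (x+1) := by field_simp; ring
    rw [this]
    exact div_le_div_of_nonneg_left hx hspos hs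
  · filter_upwards with x
    have hspos : 0 < Real.sqrt (x ^ 2 + 1) := Real.sqrt_pos.2 (by positivity)
    rw [div_le_one hspos]
    exact (my_lt_sqrt x).le

theorem xi_eventually_strictly_increasing
    (t0 tstar : ℝ) (ht0 : t0 < tstar)
    (m1 m2 m3 xi p : ℝ → ℝ)
    (hm1 : ∀ t ∈ Set.Ico t0 tstar,
      HasDerivAt m1 (xi t * (-(m2 t)^2 + (m3 t)^2 + 2 * m2 t * m3 t * xi t)) t)
    (hm2 : ∀ t ∈ Set.Ico t0 tstar,
      HasDerivAt m2 (m1 t * m2 t * xi t - m3 t * p t - 2 * m1 t * m3 t * (xi t)^2) t)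
    (hm3 : ∀ t ∈ Set.Ico t0 tstar,
      HasDerivAt m3 (m2 t * p t - m1 t * m3 t * xi t) t)
    (hxi : ∀ t ∈ Set.Ico t0 tstar,
      HasDerivAt xi (-((xi t)^2 + 1) * (2 * p t - m1 t)) t)
    (hp : ∀ t ∈ Set.Ico t0 tstar,
      HasDerivAt p (-((xi t)^2 + 1) * (1 + m2 t * m3 t - 2 * (m3 t)^2 * xi t)) t)
    (hcoll : Tendsto xi (nhdsWithin tstar (Set.Iio tstar)) atTop) :
    ∃ t1 ∈ Set.Ico t0 tstar, ∀ t ∈ Set.Ico t1 tstar, 0 < deriv xi t := by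
  -- conservation of energy
  set E0 : ℝ := p t0 ^ 2 - m1 t0 * p t0 + (m3 t0) ^ 2 * (xi t0) ^ 2
      - m2 t0 * m3 t0 * xi t0 - xi t0 with hE0def
  set M0 : ℝ := (m1 t0) ^ 2 + (m2 t0) ^ 2 + (m3 t0) ^ 2 with hM0def
  have hEc : ∀ t ∈ Set.Ico t0 tstar,
      p t ^ 2 - m1 t * p t + (m3 t) ^ 2 * (xi t) ^ 2 - m2 t * m3 t * xi t - xi t = E0 := by
    have hder : ∀ t ∈ Set.Ico t0 tstar, HasDerivAt
        (fun t => p t ^ 2 - m1 t * p t + (m3 t) ^ 2 * (xi t) ^ 2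
          - m2 t * m3 t * xi t - xi t) 0 t := by
      intro t ht
      have h1 := hm1 t ht; have h2 := hm2 t ht; have h3 := hm3 t ht
      have h4 := hxi t ht; have h5 := hp t ht
      have h := ((((h5.pow 2).sub (h1.mul h5)).add
        ((h3.pow 2).mul (h4.pow 2))).sub ((h2.mul h3).mul h4)).sub h4
      refine h.congr_deriv (Eq.symm ?_)
      simp only [Pi.pow_apply, Pi.mul_apply]
      ring
    intro t ht
    have h := my_const_of_deriv_zero hder t ht
    simpa using h
  have hMc : ∀ t ∈ Set.Ico t0 tstar,
      (m1 t) ^ 2 + (m2 t) ^ 2 + (m3 t) ^ 2 = M0 := by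
    have hder : ∀ t ∈ Set.Ico t0 tstar, HasDerivAt
        (fun t => (m1 t) ^ 2 + (m2 t) ^ 2 + (m3 t) ^ 2) 0 t := by
      intro t ht
      have h1 := hm1 t ht; have h2 := hm2 t ht; have h3 := hm3 t ht
      have h := ((h1.pow 2).add (h2.pow 2)).add (h3.pow 2)
      refine h.congr_deriv (Eq.symm ?_)
      ring
    intro t ht
    have h := my_const_of_deriv_zero hder t ht
    simpa using h
  have hM0 : 0 ≤ M0 := by rw [hM0def]; positivity
  -- derivative of z = xi/sqrt(xi^2+1) and of zd = -(2p-m1)/sqrt(xi^2+1)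
  have hspos : ∀ t : ℝ, 0 < Real.sqrt (xi t ^ 2 + 1) :=
    fun t => Real.sqrt_pos.2 (by positivity)
  have hs2 : ∀ t : ℝ, Real.sqrt (xi t ^ 2 + 1) ^ 2 = xi t ^ 2 + 1 :=
    fun t => Real.sq_sqrt (by positivity)
  have hsq : ∀ t ∈ Set.Ico t0 tstar, HasDerivAt (fun t => Real.sqrt (xi t ^ 2 + 1))
      (-(xi t * (2 * p t - m1 t) * Real.sqrt (xi t ^ 2 + 1))) t := by
    intro t ht
    have h4 := hxi t ht
    have hin : HasDerivAt (fun t => xi t ^ 2 + 1)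
        (2 * xi t ^ 1 * (-((xi t)^2 + 1) * (2 * p t - m1 t))) t := (h4.pow 2).add_const 1
    have h := hin.sqrt (by positivity)
    convert h using 1
    rw [eq_div_iff (by positivity)]
    linear_combination (-2 * xi t * (2 * p t - m1 t)) * hs2 t
  have hz : ∀ t ∈ Set.Ico t0 tstar, HasDerivAt (fun t => xi t / Real.sqrt (xi t ^ 2 + 1))
      (-(2 * p t - m1 t) / Real.sqrt (xi t ^ 2 + 1)) t := by
    intro t ht
    have h4 := hxi t ht
    have h := h4.div (hsq t ht) (ne_of_gt (hspos t))
    refine h.congr_deriv (Eq.symm ?_)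
    rw [div_eq_div_iff (ne_of_gt (hspos t)) (by positivity)]
    ring
  have hzd : ∀ t ∈ Set.Ico t0 tstar, HasDerivAt
      (fun t => -(2 * p t - m1 t) / Real.sqrt (xi t ^ 2 + 1))
      ((2 + 2 * m2 t * m3 t - 2 * (xi t) ^ 2 - 4 * xi t * E0
        - xi t * ((m1 t) ^ 2 + (m2 t) ^ 2 + 3 * (m3 t) ^ 2)) / Real.sqrt (xi t ^ 2 + 1)) t := by
    intro t ht
    have h1 := hm1 t ht; have h5 := hp t ht
    have hw : HasDerivAt (fun t => -(2 * p t - m1 t))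
        (-(2 * (-((xi t)^2 + 1) * (1 + m2 t * m3 t - 2 * (m3 t)^2 * xi t))
          - xi t * (-(m2 t)^2 + (m3 t)^2 + 2 * m2 t * m3 t * xi t))) t :=
      ((h5.const_mul 2).sub h1).neg
    have h := hw.div (hsq t ht) (ne_of_gt (hspos t))
    refine h.congr_deriv (Eq.symm ?_)
    rw [← hEc t ht]
    rw [div_eq_div_iff (ne_of_gt (hspos t)) (by positivity)]
    ring
  -- choose t1 with xi large on [t1, tstar)
  obtain ⟨l, hl, hlsub⟩ := mem_nhdsLT_iff_exists_Ioo_subset.mp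
    (hcoll.eventually_gt_atTop (2 + M0 + 4 * |E0|))
  set t1 : ℝ := max t0 ((l + tstar) / 2) with ht1def
  have hlt : l < tstar := hl
  have ht1mem : t1 ∈ Set.Ico t0 tstar := ⟨le_max_left _ _, max_lt ht0 (by linarith)⟩
  have hsub1 : Set.Ico t1 tstar ⊆ Set.Ico t0 tstar :=
    fun x hx => ⟨le_trans ht1mem.1 hx.1, hx.2⟩
  have hbig : ∀ t ∈ Set.Ico t1 tstar, 2 + M0 + 4 * |E0| < xi t := by
    intro t ht
    exact hlsub ⟨lt_of_lt_of_le (by linarith [le_trans (le_max_right t0 ((l + tstar) / 2)) ht.1]) (le_refl t), ht.2⟩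
  -- N < 0 on [t1, tstar)
  have hNneg : ∀ t ∈ Set.Ico t1 tstar,
      (2 + 2 * m2 t * m3 t - 2 * (xi t) ^ 2 - 4 * xi t * E0
        - xi t * ((m1 t) ^ 2 + (m2 t) ^ 2 + 3 * (m3 t) ^ 2)) < 0 := by
    intro t ht
    have hb := hbig t ht
    have hM := hMc t (hsub1 ht)
    have hE0abs : -|E0| ≤ E0 := neg_abs_le E0
    have habs : (0:ℝ) ≤ |E0| := abs_nonneg E0
    have hxpos : (0:ℝ) < xi t := by nlinarith
    nlinarith [sq_nonneg (m2 t - m3 t), sq_nonneg (m1 t), sq_nonneg (m3 t),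
      mul_lt_mul_of_pos_left hb hxpos,
      mul_nonneg hxpos.le (show (0:ℝ) ≤ E0 + |E0| by linarith),
      mul_nonneg hxpos.le (show (0:ℝ) ≤ (m1 t)^2 + (m2 t)^2 + 3*(m3 t)^2 by positivity),
      mul_nonneg (show (0:ℝ) ≤ 2 + M0 by linarith) (show (0:ℝ) ≤ xi t - 1 by nlinarith),
      mul_nonneg habs hxpos.le]
  -- limit of z
  have hztend : Tendsto (fun t => xi t / Real.sqrt (xi t ^ 2 + 1))
      (nhdsWithin tstar (Set.Iio tstar)) (nhds 1) := my_tendsto_div_sqrt_one.comp hcoll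
  -- main positivity claim
  have hmain : ∀ s ∈ Set.Ico t1 tstar, 0 < -(2 * p s - m1 s) / Real.sqrt (xi s ^ 2 + 1) := by
    intro s hs
    by_contra hle
    push_neg at hle
    -- zd is strictly decreasing after s, hence negative on (s, tstar)
    have hzdneg : ∀ r ∈ Set.Ioo s tstar,
        -(2 * p r - m1 r) / Real.sqrt (xi r ^ 2 + 1) < 0 := by
      intro r hr
      have hIcc : Set.Icc s r ⊆ Set.Ico t1 tstar :=
        fun x hx => ⟨le_trans hs.1 hx.1, lt_of_le_of_lt hx.2 hr.2⟩
      have hanti := strictAntiOn_of_deriv_neg (convex_Icc s r)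
        (fun x hx => ((hzd x (hsub1 (hIcc hx))).continuousAt).continuousWithinAt)
        (fun x hx => by
          rw [interior_Icc] at hx
          rw [(hzd x (hsub1 (hIcc (Set.mem_Icc_of_Ioo hx)))).deriv]
          exact div_neg_of_neg_of_pos (hNneg x (hIcc (Set.mem_Icc_of_Ioo hx))) (hspos x))
      have := hanti (Set.left_mem_Icc.2 hr.1.le) (Set.right_mem_Icc.2 hr.1.le) hr.1
      exact lt_of_lt_of_le this hle
    -- hence z is antitone on [s, tstar)
    have hzle : ∀ r ∈ Set.Ioo s tstar,
        xi r / Real.sqrt (xi r ^ 2 + 1) ≤ xi s / Real.sqrt (xi s ^ 2 + 1) := by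
      intro r hr
      have hIcc : Set.Icc s r ⊆ Set.Ico t1 tstar :=
        fun x hx => ⟨le_trans hs.1 hx.1, lt_of_le_of_lt hx.2 hr.2⟩
      have hmono := antitoneOn_of_deriv_nonpos (convex_Icc s r)
        (fun x hx => ((hz x (hsub1 (hIcc hx))).continuousAt).continuousWithinAt)
        (fun x hx => by
          rw [interior_Icc] at hx
          exact ((hz x (hsub1 (hIcc (Set.mem_Icc_of_Ioo hx)))).differentiableAt).differentiableWithinAt)
        (fun x hx => by
          rw [interior_Icc] at hx
          rw [(hz x (hsub1 (hIcc (Set.mem_Icc_of_Ioo hx)))).deriv]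
          exact (hzdneg x ⟨hx.1, lt_trans hx.2 hr.2⟩).le)
      exact hmono (Set.left_mem_Icc.2 hr.1.le) (Set.right_mem_Icc.2 hr.1.le) hr.1.le
    have hmem : Set.Ioo s tstar ∈ nhdsWithin tstar (Set.Iio tstar) :=
      Ioo_mem_nhdsLT hs.2
    have hle1 : (1:ℝ) ≤ xi s / Real.sqrt (xi s ^ 2 + 1) := by
      refine le_of_tendsto hztend ?_
      filter_upwards [hmem] with r hr using hzle r hr
    have hlt1 : xi s / Real.sqrt (xi s ^ 2 + 1) < 1 :=
      (div_lt_one (hspos s)).2 (my_lt_sqrt (xi s))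
    linarith
  -- conclusion
  refine ⟨t1, ht1mem, fun t ht => ?_⟩
  have hwneg : 2 * p t - m1 t < 0 := by
    have h := hmain t ht
    by_contra hge
    push_neg at hge
    have : -(2 * p t - m1 t) / Real.sqrt (xi t ^ 2 + 1) ≤ 0 :=
      div_nonpos_of_nonpos_of_nonneg (by linarith) (hspos t).le
    linarith
  rw [(hxi t (hsub1 ht)).deriv]
  have hu : (0:ℝ) < xi t ^ 2 + 1 := by positivity
  nlinarith [mul_pos hu (neg_pos.2 hwneg)]
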